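/- For all a, b > 0 with a ≠ b and every c ∈ (0,1), setting t = a/b with t > 1 (assuming a > b), one has T(a,b) − (c·D(a,b) + (1−c)·H(a,b)) = b · (c(t+1)(t³+1) + 2(1−c)t(t²+1)) / (2(t+1)(t²+1)·arctan((t−1)/(t+1))) · f_c(t), where f_c(t) = (t⁴−1)/(c t⁴ + (2−c) t³ + (2−c) t + c) − 2 arctan((t−1)/(t+1)). -/

import Mathlib

set_option maxHeartbeats 1000000


noncomputable def harmonicMean (a b : ℝ) : ℝ := 2 * a * b / (a + b)

noncomputable def seiffertT (a b : ℝ) : ℝ := (a - b) / (2 * Real.arctan ((a - b) / (a + b)))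

noncomputable def contraD (a b : ℝ) : ℝ := (a ^ 3 + b ^ 3) / (a ^ 2 + b ^ 2)

noncomputable def f (c t : ℝ) : ℝ :=
  (t ^ 4 - 1) / (c * t ^ 4 + (2 - c) * t ^ 3 + (2 - c) * t + c)
    - 2 * Real.arctan ((t - 1) / (t + 1))

theorem stmt_19 (a b c : ℝ) (ha : 0 < a) (hb : 0 < b) (hab : b < a)
    (hc : c ∈ Set.Ioo (0 : ℝ) 1) :
    seiffertT a b - (c * contraD a b + (1 - c) * harmonicMean a b) =
      b * ((c * (a / b + 1) * ((a / b) ^ 3 + 1) + 2 * (1 - c) * (a / b) * ((a / b) ^ 2 + 1)) /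
        (2 * (a / b + 1) * ((a / b) ^ 2 + 1) * Real.arctan ((a / b - 1) / (a / b + 1)))) *
        f c (a / b) := by
  obtain ⟨hc0, hc1⟩ := hc
  have hb' : b ≠ 0 := ne_of_gt hb
  set t : ℝ := a / b with ht
  have ht1 : 1 < t := (one_lt_div hb).mpr hab
  have ht0 : 0 < t := by linarith
  have htp1 : (0:ℝ) < t + 1 := by linarith
  have hat : a = b * t := by rw [ht]; field_simp
  have harg : (a - b) / (a + b) = (t - 1) / (t + 1) := by
    rw [hat]
    rw [show b * t - b = b * (t - 1) by ring, show b * t + b = b * (t + 1) by ring,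
      mul_div_mul_left _ _ hb']
  have hA : 0 < Real.arctan ((t - 1) / (t + 1)) := by
    have := Real.arctan_strictMono (show (0:ℝ) < (t - 1) / (t + 1) by
      exact div_pos (by linarith) htp1)
    simpa using this
  have hP : 0 < c * t ^ 4 + (2 - c) * t ^ 3 + (2 - c) * t + c := by
    nlinarith [mul_pos hc0 (pow_pos ht0 4), mul_pos (show (0:ℝ) < 2 - c by linarith) (pow_pos ht0 3),
      mul_pos (show (0:ℝ) < 2 - c by linarith) ht0]
  rw [seiffertT, contraD, harmonicMean, f, harg, hat]
  set A : ℝ := Real.arctan ((t - 1) / (t + 1)) with hA'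
  clear_value A
  have hA0 : A ≠ 0 := ne_of_gt hA
  have ht2 : (0:ℝ) < t ^ 2 + 1 := by positivity
  have hbb : (0:ℝ) < (b * t) ^ 2 + b ^ 2 := by positivity
  have hbb2 : (0:ℝ) < b * t + b := by positivity
  have hPne := hP.ne'
  field_simp
  have hQ : t * (t ^ 2 * (t * c + (2 - c)) + (2 - c)) + c = c * (t ^ 3 + 1) * (t + 1) + t * 2 * (t ^ 2 + 1) * (1 - c) := by ring
  have hQne : c * (t ^ 3 + 1) * (t + 1) + t * 2 * (t ^ 2 + 1) * (1 - c) ≠ 0 := by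
    rw [← hQ]; have : t * (t ^ 2 * (t * c + (2 - c)) + (2 - c)) + c = c * t ^ 4 + (2 - c) * t ^ 3 + (2 - c) * t + c := by ring
    rw [this]; exact hPne
  rw [hQ]
  field_simp
  ring
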